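/- Let X be a metric space with base point o, let G be a countable group acting freely on X by isometries, let μ be a G-invariant Borel measure on X, and let M₀ ⊆ X be a Borel fundamental domain for the action (the translates g·M₀, g ∈ G, are pairwise disjoint and cover X). Suppose 0 < d < D are such that the open ball B(o, d) is contained in M₀ and M₀ is contained in B(o, D). Then for every R ≥ 0: (i) π(R) · μ(B(o, d)) ≤ μ(B(o, R + d)), and (ii) μ(B(o, R)) ≤ π(R + D) · μ(M₀), where π(R) = #{g ∈ G : d(o, g·o) ≤ R}. -/

import Mathlib

open Filter Metric Topology MeasureTheory ENNReal Pointwise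

/-- Orbit counting vs. volume: if `G` acts freely by isometries on `X` preserving the
Borel measure `μ`, with Borel fundamental domain `M₀` satisfying
`B(o,d) ⊆ M₀ ⊆ B(o,D)`, then for every `R ≥ 0`,
(i) `π(R)·μ(B(o,d)) ≤ μ(B(o,R+d))` and (ii) `μ(B(o,R)) ≤ π(R+D)·μ(M₀)`,
where `π(R) = #{g : d(o, g·o) ≤ R}`. -/
theorem orbit_counting_volume_bounds {X : Type*} [MetricSpace X]
    [MeasurableSpace X] [BorelSpace X]
    (o : X) {G : Type*} [Group G] [Countable G] [MulAction G X]
    (hiso : ∀ g : G, Isometry (fun x : X => g • x))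
    (hfree : ∀ g : G, g ≠ 1 → ∀ x : X, g • x ≠ x)
    (μ : Measure X)
    (hinv : ∀ g : G, Measure.map (fun x : X => g • x) μ = μ)
    (M₀ : Set X) (hM₀ : MeasurableSet M₀)
    (hdisj : ∀ g h : G, g ≠ h → Disjoint (g • M₀) (h • M₀))
    (hcover : ⋃ g : G, g • M₀ = Set.univ)
    (d D : ℝ) (hd : 0 < d) (hdD : d < D)
    (hball : Metric.ball o d ⊆ M₀) (hM₀D : M₀ ⊆ Metric.ball o D) :
    ∀ R : ℝ, 0 ≤ R →
      ({g : G | dist o (g • o) ≤ R}.encard : ℝ≥0∞) * μ (Metric.ball o d) ≤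
          μ (Metric.ball o (R + d)) ∧
      μ (Metric.ball o R) ≤
          ({g : G | dist o (g • o) ≤ R + D}.encard : ℝ≥0∞) * μ M₀ := by
  -- basic facts
  have hmeas : ∀ g : G, Measurable (fun x : X => g • x) :=
    fun g => (hiso g).continuous.measurable
  have hsmul_ball : ∀ (g : G) (r : ℝ), g • Metric.ball o r = Metric.ball (g • o) r := by
    intro g r
    ext x
    constructor
    · rintro ⟨y, hy, rfl⟩
      simpa [Metric.mem_ball, (hiso g).dist_eq] using hy
    · intro hx
      refine ⟨g⁻¹ • x, ?_, by simp⟩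
      have := (hiso g⁻¹).dist_eq x (g • o)
      simp only [inv_smul_smul] at this
      simpa [Metric.mem_ball, dist_comm, ← this] using hx
  have hpre : ∀ (g : G) (s : Set X), g • s = (fun x : X => g⁻¹ • x) ⁻¹' s := by
    intro g s
    ext x
    simp [Set.mem_smul_set_iff_inv_smul_mem, Set.mem_preimage]
  have hμsmul : ∀ (g : G) (s : Set X), MeasurableSet s → μ (g • s) = μ s := by
    intro g s hs
    rw [hpre g s, ← Measure.map_apply (hmeas g⁻¹) hs, hinv g⁻¹]
  intro R hR
  constructor
  · -- (i)
    set S : Set G := {g : G | dist o (g • o) ≤ R} with hS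
    have hunion : (⋃ g : S, (g : G) • Metric.ball o d) ⊆ Metric.ball o (R + d) := by
      rintro x hx
      simp only [Set.mem_iUnion] at hx
      obtain ⟨⟨g, hg⟩, hx⟩ := hx
      rw [hsmul_ball] at hx
      have : dist o x < R + d :=
        calc dist o x ≤ dist o (g • o) + dist (g • o) x := dist_triangle _ _ _
          _ < R + d := add_lt_add_of_le_of_lt hg (by simpa [Metric.mem_ball, dist_comm] using hx)
      simpa [Metric.mem_ball, dist_comm] using this
    have hdisj' : Pairwise (Function.onFun Disjoint
        (fun g : S => (g : G) • Metric.ball o d)) := by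
      rintro ⟨g, hg⟩ ⟨h, hh⟩ hne
      have hgh : g ≠ h := by simpa [Subtype.ext_iff] using hne
      exact Set.disjoint_of_subset (Set.smul_set_mono hball) (Set.smul_set_mono hball)
        (hdisj g h hgh)
    have hmeas' : ∀ g : S, MeasurableSet ((g : G) • Metric.ball o d) := by
      intro g
      rw [hsmul_ball]
      exact measurableSet_ball
    calc ({g : G | dist o (g • o) ≤ R}.encard : ℝ≥0∞) * μ (Metric.ball o d)
        = ∑' _ : S, μ (Metric.ball o d) := (ENNReal.tsum_set_const _ _).symm
      _ = ∑' g : S, μ ((g : G) • Metric.ball o d) := by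
          refine tsum_congr fun g => ?_
          rw [hμsmul _ _ measurableSet_ball]
      _ = μ (⋃ g : S, (g : G) • Metric.ball o d) := (measure_iUnion hdisj' hmeas').symm
      _ ≤ μ (Metric.ball o (R + d)) := measure_mono hunion
  · -- (ii)
    set S : Set G := {g : G | dist o (g • o) ≤ R + D} with hS
    have hsub : Metric.ball o R ⊆ ⋃ g : S, (g : G) • M₀ := by
      intro x hx
      have : x ∈ ⋃ g : G, g • M₀ := by rw [hcover]; trivial
      simp only [Set.mem_iUnion] at this
      obtain ⟨g, m, hm, rfl⟩ := this
      have hgS : g ∈ S := by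
        have hmD : dist (g • m) (g • o) < D := by
          rw [(hiso g).dist_eq]
          simpa [Metric.mem_ball] using hM₀D hm
        have : dist o (g • o) ≤ R + D :=
          le_of_lt (calc dist o (g • o) ≤ dist o (g • m) + dist (g • m) (g • o) :=
              dist_triangle _ _ _
            _ < R + D := add_lt_add (by simpa [Metric.mem_ball, dist_comm] using hx) hmD)
        exact this
      exact Set.mem_iUnion.mpr ⟨⟨g, hgS⟩, ⟨m, hm, rfl⟩⟩
    calc μ (Metric.ball o R) ≤ μ (⋃ g : S, (g : G) • M₀) := measure_mono hsub
      _ ≤ ∑' g : S, μ ((g : G) • M₀) := measure_iUnion_le _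
      _ = ∑' _ : S, μ M₀ := tsum_congr fun g => hμsmul _ _ hM₀
      _ = ({g : G | dist o (g • o) ≤ R + D}.encard : ℝ≥0∞) * μ M₀ :=
          ENNReal.tsum_set_const _ _
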